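/- arXiv:1410.0470 — 2 statements merged into one kernel-verified Lean document; each statement's English description precedes it below -/
import Mathlib

section
/- Convergence of the price-adjustment dynamics: Suppose −1 < λ(β^d − β^s) < 0. Then for any initial state (p_0, q^d_0, q^s_0) ∈ ℝ³, the sequences defined by p_{k+1} = p_k + λ(q^d_k − q^s_k), q^d_{k+1} = α^d + β^d p_k + ε^d, q^s_{k+1} = α^s + β^s p_k + ε^s converge: p_k → p* = (α^s + ε^s − α^d − ε^d)/(β^d − β^s), and q^d_k, q^s_k both converge to q* = α^d + β^d p* + ε^d. -/
open Filter

set_option maxHeartbeats 1600000 in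
/-- convergence of the price-adjustment dynamics: if
`−1 < λ(β^d − β^s) < 0`, then for any initial state the sequences evolving by
`p_{k+1} = p_k + λ(q^d_k − q^s_k)`, `q^d_{k+1} = α^d + β^d p_k + ε^d`,
`q^s_{k+1} = α^s + β^s p_k + ε^s` converge: `p_k → p* = (α^s + ε^s − α^d − ε^d)/(β^d − β^s)`
and `q^d_k, q^s_k → q* = α^d + β^d p* + ε^d`. -/
theorem stmt13 (αd βd εd αs βs εs lam : ℝ)
    (h1 : -1 < lam * (βd - βs)) (h2 : lam * (βd - βs) < 0)
    (p qd qs : ℕ → ℝ)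
    (hp : ∀ k, p (k + 1) = p k + lam * (qd k - qs k))
    (hqd : ∀ k, qd (k + 1) = αd + βd * p k + εd)
    (hqs : ∀ k, qs (k + 1) = αs + βs * p k + εs) :
    Tendsto p atTop (nhds ((αs + εs - αd - εd) / (βd - βs))) ∧
    Tendsto qd atTop
      (nhds (αd + βd * ((αs + εs - αd - εd) / (βd - βs)) + εd)) ∧
    Tendsto qs atTop
      (nhds (αd + βd * ((αs + εs - αd - εd) / (βd - βs)) + εd)) := by
  set μ : ℝ := lam * (βd - βs) with hμ
  have hb : βd - βs ≠ 0 := by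
    intro h; rw [hμ, h, mul_zero] at h2; exact lt_irrefl 0 h2
  set pstar : ℝ := (αs + εs - αd - εd) / (βd - βs) with hpstar
  have key : μ * pstar = lam * (αs + εs - αd - εd) := by
    rw [hμ, hpstar]; field_simp
  -- second order recurrence for the error
  have hpr : ∀ k, p (k + 2) - pstar = (p (k + 1) - pstar) + μ * (p k - pstar) := by
    intro k
    have := hp (k + 1)
    rw [hqd k, hqs k] at this
    have h2' : p (k + 2) = p (k + 1) + lam * ((αd + βd * p k + εd) - (αs + βs * p k + εs)) := this
    rw [h2']
    linear_combination key - p k * hμ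
  -- complexify
  set E : ℕ → ℂ := fun k => ((p k - pstar : ℝ) : ℂ) with hE
  have hEr : ∀ k, E (k + 2) = E (k + 1) + (μ : ℂ) * E k := by
    intro k
    simp only [hE]
    push_cast
    exact_mod_cast congrArg (fun x : ℝ => (x : ℂ)) (by push_cast; linarith [hpr k] : (p (k+2) - pstar : ℝ) = (p (k+1) - pstar) + μ * (p k - pstar))
  -- roots of x^2 = x + μ
  set t : ℂ := if 0 ≤ 1 + 4 * μ then ((Real.sqrt (1 + 4 * μ) : ℝ) : ℂ)
      else ((Real.sqrt (-(1 + 4 * μ)) : ℝ) : ℂ) * Complex.I with ht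
  have ht2 : t ^ 2 = ((1 + 4 * μ : ℝ) : ℂ) := by
    by_cases h : 0 ≤ 1 + 4 * μ
    · rw [ht, if_pos h]
      push_cast
      rw [← Complex.ofReal_pow, Real.sq_sqrt h]
      push_cast; ring
    · push_neg at h
      rw [ht, if_neg (not_le.mpr h)]
      have : ((Real.sqrt (-(1 + 4 * μ)) : ℝ) : ℂ) ^ 2 = ((-(1 + 4 * μ) : ℝ) : ℂ) := by
        rw [← Complex.ofReal_pow, Real.sq_sqrt (by linarith)]
      rw [mul_pow, this, Complex.I_sq]
      push_cast; ring
  set r : ℂ := (1 + t) / 2 with hr_def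
  set s : ℂ := (1 - t) / 2 with hs_def
  have hsum : r + s = 1 := by rw [hr_def, hs_def]; ring
  have hprod : r * s = -(μ : ℂ) := by
    rw [hr_def, hs_def]
    have : (1 + t) / 2 * ((1 - t) / 2) = (1 - t ^ 2) / 4 := by ring
    rw [this, ht2]; push_cast; ring
  -- norms of the roots
  have hrn : ‖r‖ < 1 ∧ ‖s‖ < 1 := by
    by_cases h : 0 ≤ 1 + 4 * μ
    · have hlt : Real.sqrt (1 + 4 * μ) < 1 := by
        nlinarith [Real.sq_sqrt h, Real.sqrt_nonneg (1 + 4 * μ)]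
      have hge : 0 ≤ Real.sqrt (1 + 4 * μ) := Real.sqrt_nonneg _
      constructor
      · rw [hr_def, ht, if_pos h]
        have : ((1 : ℂ) + (Real.sqrt (1 + 4 * μ) : ℂ)) / 2 = (((1 + Real.sqrt (1 + 4 * μ)) / 2 : ℝ) : ℂ) := by push_cast; ring
        rw [this, Complex.norm_real, Real.norm_eq_abs, abs_of_nonneg (by linarith)]
        linarith
      · rw [hs_def, ht, if_pos h]
        have : ((1 : ℂ) - (Real.sqrt (1 + 4 * μ) : ℂ)) / 2 = (((1 - Real.sqrt (1 + 4 * μ)) / 2 : ℝ) : ℂ) := by push_cast; ring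
        rw [this, Complex.norm_real, Real.norm_eq_abs, abs_of_nonneg (by linarith)]
        linarith
    · push_neg at h
      have hu2 : Real.sqrt (-(1 + 4 * μ)) ^ 2 = -(1 + 4 * μ) := Real.sq_sqrt (by linarith)
      have hμ1 : -μ < 1 := by linarith [h1]
      constructor
      · have hre : r.re = 1 / 2 := by
          rw [hr_def, ht, if_neg (not_le.mpr h)]; simp
        have him : r.im = Real.sqrt (-(1 + 4 * μ)) / 2 := by
          rw [hr_def, ht, if_neg (not_le.mpr h)]; simp
        have hnsq : ‖r‖ ^ 2 = -μ := by
          rw [Complex.sq_norm, Complex.normSq_apply, hre, him]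
          nlinarith [hu2]
        nlinarith [norm_nonneg r]
      · have hre : s.re = 1 / 2 := by
          rw [hs_def, ht, if_neg (not_le.mpr h)]; simp
        have him : s.im = -(Real.sqrt (-(1 + 4 * μ)) / 2) := by
          rw [hs_def, ht, if_neg (not_le.mpr h)]; simp; ring
        have hnsq : ‖s‖ ^ 2 = -μ := by
          rw [Complex.sq_norm, Complex.normSq_apply, hre, him]
          nlinarith [hu2]
        nlinarith [norm_nonneg s]
  set ρ : ℝ := max ‖r‖ ‖s‖ with hρ
  have hρ1 : ρ < 1 := max_lt hrn.1 hrn.2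
  have hρ0 : 0 ≤ ρ := le_trans (norm_nonneg r) (le_max_left _ _)
  have hρhalf : 1 / 2 ≤ ρ := by
    have h1' : ‖r + s‖ ≤ ‖r‖ + ‖s‖ := norm_add_le _ _
    rw [hsum, norm_one] at h1'
    have := le_max_left ‖r‖ ‖s‖
    have := le_max_right ‖r‖ ‖s‖
    linarith
  -- auxiliary sequence
  set F : ℕ → ℂ := fun k => E (k + 1) - r * E k with hF
  have hFs : ∀ k, F (k + 1) = s * F k := by
    intro k
    simp only [hF]
    rw [hEr k]
    linear_combination (-(E (k + 1))) * hsum + (E k) * hprod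
  have hFk : ∀ k, F k = s ^ k * F 0 := by
    intro k
    induction k with
    | zero => simp
    | succ n ih => rw [hFs n, ih, pow_succ]; ring
  -- main bound
  have hEstep : ∀ k, E (k + 1) = r * E k + s ^ k * F 0 := by
    intro k
    have := hFk k
    simp only [hF] at this
    linear_combination this
  have hrρ : ‖r‖ ≤ ρ := le_max_left _ _
  have hsρ : ‖s‖ ≤ ρ := le_max_right _ _
  clear_value t r s ρ E F
  have hbound : ∀ k, ‖E k‖ ≤ (‖E 0‖ + 2 * k * ‖F 0‖) * ρ ^ k := by
    intro k
    induction k with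
    | zero => simp
    | succ n ih =>
      have h1' : ‖E (n + 1)‖ ≤ ‖r‖ * ‖E n‖ + ‖s‖ ^ n * ‖F 0‖ := by
        rw [hEstep n]
        calc ‖r * E n + s ^ n * F 0‖ ≤ ‖r * E n‖ + ‖s ^ n * F 0‖ := norm_add_le _ _
        _ = ‖r‖ * ‖E n‖ + ‖s‖ ^ n * ‖F 0‖ := by rw [norm_mul, norm_mul, norm_pow]
      have hsn : ‖s‖ ^ n ≤ ρ ^ n := pow_le_pow_left₀ (norm_nonneg _) hsρ n
      have hρn : (0:ℝ) ≤ ρ ^ n := pow_nonneg hρ0 n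
      have hEn : (0:ℝ) ≤ ‖E n‖ := norm_nonneg _
      have hF0 : (0:ℝ) ≤ ‖F 0‖ := norm_nonneg _
      have h2' : ‖E (n + 1)‖ ≤ ρ * ‖E n‖ + ρ ^ n * ‖F 0‖ := by
        nlinarith
      have h3' : ρ * ‖E n‖ ≤ ρ * ((‖E 0‖ + 2 * n * ‖F 0‖) * ρ ^ n) := by
        exact mul_le_mul_of_nonneg_left ih hρ0
      have h4' : ρ ^ n * ‖F 0‖ ≤ 2 * ρ * ρ ^ n * ‖F 0‖ := by
        nlinarith [mul_nonneg (mul_nonneg (by linarith : (0:ℝ) ≤ 2 * ρ - 1) hρn) hF0]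
      have : ‖E (n+1)‖ ≤ (‖E 0‖ + 2 * (n+1) * ‖F 0‖) * ρ ^ (n+1) := by
        rw [pow_succ]
        nlinarith
      push_cast
      push_cast at this
      linarith
  -- conclude p converges
  have htend : Tendsto (fun k : ℕ => (‖E 0‖ + 2 * k * ‖F 0‖) * ρ ^ k) atTop (nhds 0) := by
    have h1' : Tendsto (fun k : ℕ => ‖E 0‖ * ρ ^ k) atTop (nhds 0) := by
      simpa using (tendsto_pow_atTop_nhds_zero_of_lt_one hρ0 hρ1).const_mul ‖E 0‖
    have h2' : Tendsto (fun k : ℕ => 2 * ‖F 0‖ * (k * ρ ^ k)) atTop (nhds 0) := by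
      simpa using (tendsto_self_mul_const_pow_of_lt_one hρ0 hρ1).const_mul (2 * ‖F 0‖)
    have := h1'.add h2'
    simp only [add_zero] at this
    convert this using 2 with k
    ring
  have habs : Tendsto (fun k => |p k - pstar|) atTop (nhds 0) := by
    apply squeeze_zero (fun k => abs_nonneg _) _ htend
    intro k
    have hnorm : ‖E k‖ = |p k - pstar| := by
      rw [hE]
      show ‖((p k - pstar : ℝ) : ℂ)‖ = _
      rw [Complex.norm_real, Real.norm_eq_abs]
    rw [← hnorm]
    exact hbound k
  have hP : Tendsto p atTop (nhds pstar) := by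
    rw [tendsto_iff_dist_tendsto_zero]
    simpa [Real.dist_eq] using habs
  refine ⟨hP, ?_, ?_⟩
  · rw [← tendsto_add_atTop_iff_nat 1]
    have : (fun n => qd (n + 1)) = fun n => αd + βd * p n + εd := funext hqd
    rw [this]
    exact ((tendsto_const_nhds.add (hP.const_mul βd)).add tendsto_const_nhds)
  · rw [← tendsto_add_atTop_iff_nat 1]
    have : (fun n => qs (n + 1)) = fun n => αs + βs * p n + εs := funext hqs
    rw [this]
    have hlim : Tendsto (fun n => αs + βs * p n + εs) atTop (nhds (αs + βs * pstar + εs)) :=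
      (tendsto_const_nhds.add (hP.const_mul βs)).add tendsto_const_nhds
    have heq : αs + βs * pstar + εs = αd + βd * pstar + εd := by
      rw [hpstar]; field_simp; ring
    rw [← heq]; exact hlim
end

section
/- Time averages of the price-adjustment dynamics satisfy the bicausal equilibrium model: Suppose −1 < λ(β^d − β^s) < 0. Then for any initial state, the Cesàro time averages P̄_n = (1/n) Σ_{k=0}^{n−1} p_k, Q̄^d_n = (1/n) Σ_{k=0}^{n−1} q^d_k, Q̄^s_n = (1/n) Σ_{k=0}^{n−1} q^s_k converge as n → ∞ to limits P̄, Q̄^d, Q̄^s that satisfy the structural equations Q̄^d = α^d + β^d P̄ + ε^d and Q̄^s = α^s + β^s P̄ + ε^s together with the equilibrium condition Q̄^d = Q̄^s. -/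
open Filter

lemma aux_decay (μ : ℝ) (h1 : -1 < μ) (h2 : μ < 0) (e : ℕ → ℝ)
    (hrec : ∀ k, e (k + 2) = e (k + 1) + μ * e k) :
    Tendsto e atTop (nhds 0) := by
  obtain ⟨r, r', hsum, hprod, hr, hr'⟩ :
      ∃ r r' : ℂ, r + r' = 1 ∧ r * r' = ((-μ : ℝ) : ℂ) ∧
        ‖r‖ < 1 ∧ ‖r'‖ < 1 := by
    rcases le_or_gt 0 (1 + 4 * μ) with hd | hd
    · set s := Real.sqrt (1 + 4 * μ) with hs
      have hs0 : 0 ≤ s := Real.sqrt_nonneg _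
      have hs1 : s < 1 := by nlinarith [Real.sq_sqrt hd, hs0]
      have hssq : s ^ 2 = 1 + 4 * μ := Real.sq_sqrt hd
      refine ⟨(((1 + s) / 2 : ℝ) : ℂ), (((1 - s) / 2 : ℝ) : ℂ), ?_, ?_, ?_, ?_⟩
      · push_cast; ring
      · push_cast
        have hc : ((s : ℂ)) ^ 2 = 1 + 4 * (μ:ℂ) := by exact_mod_cast hssq
        linear_combination (-1/4 : ℂ) * hc
      · rw [Complex.norm_real, Real.norm_of_nonneg (by linarith)]; linarith
      · rw [Complex.norm_real, Real.norm_of_nonneg (by linarith)]; linarith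
    · set t := Real.sqrt (-(1 + 4 * μ)) with ht
      have htsq : t ^ 2 = -(1 + 4 * μ) := Real.sq_sqrt (by linarith)
      have habs : ∀ z : ℂ, z.re = 1/2 → z.im ^ 2 = t^2/4 → ‖z‖ < 1 := by
        intro z hre him
        have hA : ‖z‖ ^ 2 = Complex.normSq z := Complex.sq_norm z
        rw [Complex.normSq_apply, hre] at hA
        have him' : z.im * z.im = t ^ 2 / 4 := by rw [← him]; ring
        nlinarith [norm_nonneg z, hA, him', htsq]
      refine ⟨⟨1/2, t/2⟩, ⟨1/2, -(t/2)⟩, ?_, ?_, ?_, ?_⟩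
      · refine Complex.ext ?_ ?_
        · simp; norm_num
        · simp
      · refine Complex.ext ?_ ?_
        · simp [Complex.mul_re]; nlinarith [htsq]
        · simp [Complex.mul_im]; ring
      · exact habs _ rfl (by simp; ring)
      · exact habs _ rfl (by simp; ring)
  set E : ℕ → ℂ := fun k => (e k : ℂ) with hE
  have hErec : ∀ k, E (k + 2) = E (k + 1) + (μ : ℂ) * E k := by
    intro k
    have := hrec k
    simp only [hE]
    exact_mod_cast congrArg (Complex.ofReal) this
  set z : ℕ → ℂ := fun k => E (k + 1) - r' * E k with hz
  have hzrec : ∀ k, z (k + 1) = r * z k := by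
    intro k
    simp only [hz]
    have hc : ((-μ : ℝ) : ℂ) = -(μ:ℂ) := by push_cast; ring
    rw [hc] at hprod
    linear_combination hErec k - E (k+1) * hsum + E k * hprod
  have hzpow : ∀ k, z k = r ^ k * z 0 := by
    intro k
    induction k with
    | zero => simp
    | succ n ih => rw [hzrec n, ih]; ring
  have hEstep : ∀ k, E (k + 1) = r' * E k + r ^ k * z 0 := by
    intro k
    have h := hzpow k
    simp only [hz] at h
    linear_combination h
  set ρ : ℝ := max (‖r‖) (‖r'‖) with hρ
  have hr_le : ‖r‖ ≤ ρ := le_max_left _ _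
  have hr'_le : ‖r'‖ ≤ ρ := le_max_right _ _
  have hρpos : 0 < ρ := by
    have h := norm_add_le r r'
    rw [hsum] at h
    simp only [norm_one] at h
    linarith
  have hρlt : ρ < 1 := max_lt hr hr'
  set A := ‖E 0‖ with hA
  set B := ‖z 0‖ with hB
  have hbound : ∀ n, ‖E n‖ ≤ (A + n * B / ρ) * ρ ^ n := by
    intro n
    induction n with
    | zero => simp [hA]
    | succ n ih =>
      have hBnn : 0 ≤ B := norm_nonneg _
      have hEnn : 0 ≤ ‖E n‖ := norm_nonneg _
      have hpow : ‖r‖ ^ n ≤ ρ ^ n :=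
        pow_le_pow_left₀ (norm_nonneg r) hr_le n
      have hρp : 0 ≤ ρ ^ n := pow_nonneg hρpos.le n
      calc ‖E (n + 1)‖ = ‖r' * E n + r ^ n * z 0‖ := by rw [hEstep n]
        _ ≤ ‖r' * E n‖ + ‖r ^ n * z 0‖ := norm_add_le _ _
        _ = ‖r'‖ * ‖E n‖ + ‖r‖ ^ n * B := by
            rw [norm_mul, norm_mul, norm_pow]
        _ ≤ ρ * ((A + n * B / ρ) * ρ ^ n) + ρ ^ n * B := by
            have h1 : ‖r'‖ * ‖E n‖ ≤ ρ * ((A + n * B / ρ) * ρ ^ n) := by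
              have := mul_le_mul hr'_le ih hEnn hρpos.le
              linarith
            have h2 : ‖r‖ ^ n * B ≤ ρ ^ n * B :=
              mul_le_mul_of_nonneg_right hpow hBnn
            linarith
        _ = (A + (n + 1 : ℕ) * B / ρ) * ρ ^ (n + 1) := by
            field_simp
            push_cast
            ring
  have hlim : Tendsto (fun n : ℕ => (A + n * B / ρ) * ρ ^ n) atTop (nhds 0) := by
    have t1 : Tendsto (fun n : ℕ => A * ρ ^ n) atTop (nhds (A * 0)) :=
      (tendsto_pow_atTop_nhds_zero_of_lt_one hρpos.le hρlt).const_mul A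
    have t2 : Tendsto (fun n : ℕ => (B / ρ) * (n * ρ ^ n)) atTop (nhds ((B / ρ) * 0)) :=
      (tendsto_self_mul_const_pow_of_lt_one hρpos.le hρlt).const_mul (B / ρ)
    have := t1.add t2
    simp only [mul_zero, add_zero] at this
    convert this using 2 with n
    ring
  apply squeeze_zero_norm _ hlim
  intro n
  have := hbound n
  simpa [hE, Complex.norm_real] using this


/-- time averages of the price-adjustment dynamics satisfy the bicausal
equilibrium model: if `−1 < λ(β^d − β^s) < 0`, then for any initial state of the dynamics
`q^d_{k+1} = α^d + β^d p_k + ε^d`, `q^s_{k+1} = α^s + β^s p_k + ε^s`,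
`p_{k+1} = p_k + λ(q^d_k − q^s_k)`, the Cesàro time averages
`P̄_n = (1/n) Σ_{k<n} p_k`, `Q̄^d_n = (1/n) Σ_{k<n} q^d_k`, `Q̄^s_n = (1/n) Σ_{k<n} q^s_k`
converge to limits `P̄, Q̄^d, Q̄^s` satisfying the structural equations
`Q̄^d = α^d + β^d P̄ + ε^d` and `Q̄^s = α^s + β^s P̄ + ε^s` together with the equilibrium
condition `Q̄^d = Q̄^s`. -/
theorem stmt15 (αd βd εd αs βs εs lam : ℝ)
    (h1 : -1 < lam * (βd - βs)) (h2 : lam * (βd - βs) < 0)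
    (p qd qs : ℕ → ℝ)
    (hp : ∀ k, p (k + 1) = p k + lam * (qd k - qs k))
    (hqd : ∀ k, qd (k + 1) = αd + βd * p k + εd)
    (hqs : ∀ k, qs (k + 1) = αs + βs * p k + εs) :
    ∃ Pbar Qdbar Qsbar : ℝ,
      Tendsto (fun n : ℕ => (1 / (n : ℝ)) * ∑ k ∈ Finset.range n, p k)
        atTop (nhds Pbar) ∧
      Tendsto (fun n : ℕ => (1 / (n : ℝ)) * ∑ k ∈ Finset.range n, qd k)
        atTop (nhds Qdbar) ∧
      Tendsto (fun n : ℕ => (1 / (n : ℝ)) * ∑ k ∈ Finset.range n, qs k)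
        atTop (nhds Qsbar) ∧
      Qdbar = αd + βd * Pbar + εd ∧ Qsbar = αs + βs * Pbar + εs ∧ Qdbar = Qsbar := by
  have hbne : βd - βs ≠ 0 := by
    intro h; rw [h, mul_zero] at h2; exact lt_irrefl 0 h2
  obtain ⟨pstar, hkey⟩ : ∃ x : ℝ, (αd - αs) + (εd - εs) + (βd - βs) * x = 0 :=
    ⟨-(((αd - αs) + (εd - εs)) / (βd - βs)), by field_simp; ring⟩
  have hdecay : Tendsto (fun k => p k - pstar) atTop (nhds 0) := by
    apply aux_decay (lam * (βd - βs)) h1 h2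
    intro k
    have h := hp (k + 1)
    rw [hqd k, hqs k] at h
    linear_combination h + lam * hkey
  have hpl : Tendsto p atTop (nhds pstar) := by
    have := hdecay.add_const pstar
    simpa using this
  have hqdl : Tendsto qd atTop (nhds (αd + βd * pstar + εd)) := by
    rw [← tendsto_add_atTop_iff_nat 1]
    have heq : (fun n => qd (n + 1)) = fun n => αd + βd * p n + εd :=
      funext fun n => hqd n
    rw [heq]
    exact ((hpl.const_mul βd).const_add αd).add_const εd
  have hqsl : Tendsto qs atTop (nhds (αs + βs * pstar + εs)) := by
    rw [← tendsto_add_atTop_iff_nat 1]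
    have heq : (fun n => qs (n + 1)) = fun n => αs + βs * p n + εs :=
      funext fun n => hqs n
    rw [heq]
    exact ((hpl.const_mul βs).const_add αs).add_const εs
  refine ⟨pstar, αd + βd * pstar + εd, αs + βs * pstar + εs, ?_, ?_, ?_, rfl, rfl, ?_⟩
  · simpa [one_div] using hpl.cesaro
  · simpa [one_div] using hqdl.cesaro
  · simpa [one_div] using hqsl.cesaro
  · linarith [hkey]
end
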